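/- Let $R>0$, $x_0 \in \mathbb{R}^2$ with $0 < a := |x_0| < R$, and suppose $0 < \beta \leq (R-a)/(R(R+a))$. Set $\alpha^2 = R^2 - a^2$ and $\varphi(x) = (|x-x_0|^2+\alpha^2)^{-\beta R}$. Then $-\Delta \varphi(x) \geq 0$ for all $x \in \overline{B_R}$. -/

import Mathlib

open Real

noncomputable def lap (f : EuclideanSpace ℝ (Fin 2) → ℝ)
    (x : EuclideanSpace ℝ (Fin 2)) : ℝ :=
  ∑ i : Fin 2, fderiv ℝ (fun y => fderiv ℝ f y (EuclideanSpace.single i 1)) x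
    (EuclideanSpace.single i 1)

open scoped RealInnerProductSpace

section aux

variable {x₀ : EuclideanSpace ℝ (Fin 2)} {c m : ℝ}

lemma aux_u_deriv (hc : 0 < c) (y : EuclideanSpace ℝ (Fin 2)) :
    HasFDerivAt (fun z : EuclideanSpace ℝ (Fin 2) => ‖z - x₀‖ ^ 2 + c)
      (2 • (innerSL ℝ (y - x₀))) y := by
  have h := (((hasFDerivAt_id y).sub_const x₀).norm_sq).add_const c
  simpa using h

lemma aux_phi_deriv (hc : 0 < c) (y : EuclideanSpace ℝ (Fin 2)) :
    HasFDerivAt (fun z : EuclideanSpace ℝ (Fin 2) => (‖z - x₀‖ ^ 2 + c) ^ (-m))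
      ((-2 * m * (‖y - x₀‖ ^ 2 + c) ^ (-m - 1)) • innerSL ℝ (y - x₀)) y := by
  have hu : (0:ℝ) < ‖y - x₀‖ ^ 2 + c := by positivity
  have h2 : HasDerivAt (fun t : ℝ => t ^ (-m))
      ((-m) * (‖y - x₀‖ ^ 2 + c) ^ (-m - 1)) (‖y - x₀‖ ^ 2 + c) := by
    simpa using Real.hasDerivAt_rpow_const (p := -m) (Or.inl hu.ne')
  have h3 := h2.comp_hasFDerivAt y (aux_u_deriv hc y)
  refine h3.congr_fderiv ?_
  ext w
  simp [smul_smul]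
  ring

end aux

theorem stmt_4 (R β a : ℝ) (hR : 0 < R) (hβ : 0 < β)
    (x₀ : EuclideanSpace ℝ (Fin 2)) (ha : a = ‖x₀‖) (ha0 : 0 < a) (haR : a < R)
    (hβa : β ≤ (R - a) / (R * (R + a)))
    (φ : EuclideanSpace ℝ (Fin 2) → ℝ)
    (hφ : ∀ x, φ x = (‖x - x₀‖ ^ 2 + (R ^ 2 - a ^ 2)) ^ (-(β * R))) :
    ∀ x ∈ Metric.closedBall (0 : EuclideanSpace ℝ (Fin 2)) R, 0 ≤ -lap φ x := by
  intro x hx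
  set m : ℝ := β * R with hm
  set c : ℝ := R ^ 2 - a ^ 2 with hc
  have hc0 : 0 < c := by nlinarith
  have hm0 : 0 < m := by positivity
  have hφ' : φ = fun z : EuclideanSpace ℝ (Fin 2) => (‖z - x₀‖ ^ 2 + c) ^ (-m) := by
    funext z; rw [hφ z]
  -- first derivative of φ
  have hder : ∀ y : EuclideanSpace ℝ (Fin 2), HasFDerivAt φ
      ((-2 * m * (‖y - x₀‖ ^ 2 + c) ^ (-m - 1)) • innerSL ℝ (y - x₀)) y := by
    intro y; rw [hφ']; exact aux_phi_deriv hc0 y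
  have hfd : ∀ y (v : EuclideanSpace ℝ (Fin 2)),
      fderiv ℝ φ y v = (-2 * m * (‖y - x₀‖ ^ 2 + c) ^ (-m - 1)) * ⟪y - x₀, v⟫ := by
    intro y v
    rw [(hder y).fderiv]
    simp only [ContinuousLinearMap.smul_apply, innerSL_apply_apply, smul_eq_mul]
  set u : ℝ := ‖x - x₀‖ ^ 2 + c with hu
  have hu0 : 0 < u := by positivity
  -- derivative of the coefficient G y = -2m (‖y-x₀‖²+c)^(-m-1)
  have hG : HasFDerivAt (fun y : EuclideanSpace ℝ (Fin 2) =>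
      -2 * m * (‖y - x₀‖ ^ 2 + c) ^ (-m - 1))
      ((4 * m * (m + 1) * u ^ (-m - 2)) • innerSL ℝ (x - x₀)) x := by
    have h2 : HasDerivAt (fun t : ℝ => t ^ (-m - 1)) ((-m - 1) * u ^ (-m - 2)) u := by
      have := Real.hasDerivAt_rpow_const (p := -m - 1) (x := u) (Or.inl hu0.ne')
      convert this using 2
      ring
    have h3 := (h2.comp_hasFDerivAt x (aux_u_deriv (x₀ := x₀) hc0 x)).const_mul (-2 * m)
    refine h3.congr_fderiv ?_
    ext w
    simp [smul_smul]
    ring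
  -- second partial derivatives
  have hsecond : ∀ i : Fin 2,
      fderiv ℝ (fun y => fderiv ℝ φ y (EuclideanSpace.single i 1)) x
        (EuclideanSpace.single i 1)
      = 4 * m * (m + 1) * u ^ (-m - 2) * ((x - x₀) i) ^ 2
        + (-2 * m * u ^ (-m - 1)) := by
    intro i
    set v : EuclideanSpace ℝ (Fin 2) := EuclideanSpace.single i 1 with hv
    have hinner : HasFDerivAt (fun y : EuclideanSpace ℝ (Fin 2) => ⟪y - x₀, v⟫)
        ((innerSL ℝ v : EuclideanSpace ℝ (Fin 2) →L[ℝ] ℝ)) x := by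
      have h := (innerSL ℝ v).hasFDerivAt.comp x ((hasFDerivAt_id x).sub_const x₀)
      simp only [ContinuousLinearMap.comp_id] at h
      suffices hfun : (fun y : EuclideanSpace ℝ (Fin 2) => ⟪y - x₀, v⟫) = ⇑((innerSL ℝ) v) ∘ fun x => id x - x₀ by rw [hfun]; exact h
      funext y
      simp only [Function.comp, id, innerSL_apply_apply]
      exact real_inner_comm _ _
    have hprod := hG.mul hinner
    have heq : (fun y => fderiv ℝ φ y v)
        = fun y : EuclideanSpace ℝ (Fin 2) =>
          (-2 * m * (‖y - x₀‖ ^ 2 + c) ^ (-m - 1)) * ⟪y - x₀, v⟫ := by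
      funext y; exact hfd y v
    erw [heq, hprod.fderiv]
    have h1 : ⟪x - x₀, v⟫ = (x - x₀) i := by
      rw [hv]
      have := EuclideanSpace.inner_single_right (𝕜 := ℝ) i 1 (x - x₀)
      simpa using this
    have h2 : ⟪v, v⟫ = (1 : ℝ) := by
      rw [real_inner_self_eq_norm_sq, hv, EuclideanSpace.norm_single]
      norm_num
    simp only [ContinuousLinearMap.add_apply, ContinuousLinearMap.smul_apply,
      innerSL_apply_apply, smul_eq_mul]
    rw [h1, h2]
    ring
  have hnorm : ((x - x₀) 0) ^ 2 + ((x - x₀) 1) ^ 2 = ‖x - x₀‖ ^ 2 := by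
    rw [EuclideanSpace.norm_eq, Real.sq_sqrt (by positivity)]
    simp [Fin.sum_univ_two]
  have hlap : lap φ x = 4 * m * (m + 1) * u ^ (-m - 2) * ‖x - x₀‖ ^ 2
      + 2 * (-2 * m * u ^ (-m - 1)) := by
    rw [lap, Fin.sum_univ_two, hsecond 0, hsecond 1, ← hnorm]
    ring
  -- rewrite u^(-m-1) = u^(-m-2) * u
  have hpow : u ^ (-m - 1) = u ^ (-m - 2) * u := by
    rw [show (-m - 1 : ℝ) = (-m - 2) + 1 by ring, Real.rpow_add hu0, Real.rpow_one]
  -- bound ‖x - x₀‖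
  have hr : ‖x - x₀‖ ≤ R + a := by
    calc ‖x - x₀‖ ≤ ‖x‖ + ‖x₀‖ := norm_sub_le x x₀
    _ ≤ R + a := by
      have hx' : ‖x‖ ≤ R := by simpa [Metric.mem_closedBall, dist_zero_right] using hx
      rw [ha]; linarith [le_of_eq (rfl : ‖x₀‖ = ‖x₀‖)]
  have hkey : m * ‖x - x₀‖ ^ 2 ≤ c := by
    have hβa' : β * (R * (R + a)) ≤ R - a := by
      have hpos : (0:ℝ) < R * (R + a) := by positivity
      calc β * (R * (R + a)) ≤ (R - a) / (R * (R + a)) * (R * (R + a)) :=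
            mul_le_mul_of_nonneg_right hβa hpos.le
        _ = R - a := div_mul_cancel₀ _ hpos.ne'
    have h1 : m * ‖x - x₀‖ ^ 2 ≤ m * (R + a) ^ 2 :=
      mul_le_mul_of_nonneg_left (pow_le_pow_left₀ (norm_nonneg _) hr 2) hm0.le
    have h2 := mul_le_mul_of_nonneg_right hβa' (show (0:ℝ) ≤ R + a by linarith)
    rw [hm, hc]
    nlinarith [h1, h2]
  have hlapval : -lap φ x = 4 * m * u ^ (-m - 2) * (c - m * ‖x - x₀‖ ^ 2) := by
    rw [hlap, hpow, hu]
    ring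
  rw [hlapval]
  have h3 : (0:ℝ) ≤ u ^ (-m - 2) := Real.rpow_nonneg hu0.le _
  have h4 : (0:ℝ) ≤ 4 * m * u ^ (-m - 2) := mul_nonneg (by linarith) h3
  exact mul_nonneg h4 (by linarith)
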